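/- Fix γ > 0 and assume: (target regularity) x ↦ log p(x, y) has K_p-Lipschitz gradient; (kernel regularity) k_θ(x|z) + ‖∇_{(θ,x,z)} k_θ(x|z)‖ ≤ B_k and ‖∇_x k_θ(x|z) − ∇_x k_{θ'}(x'|z')‖ ≤ K_k ‖(θ, x, z) − (θ', x', z')‖; (reparameterization regularity) ‖∇_{(θ,z)} φ_θ(z, ε)‖_F ≤ a_φ‖ε‖ + b_φ. Define d^{p,γ}_{θ,r}(z, ε) := s^γ_{θ,r}(z, ε) − s_p(z, ε), where s^γ_{θ,r}(z, ε) := ∇_x log(q_{θ,r}(x) + γ) and s_p(z, ε) := ∇_x log p(x, y), both at x = φ_θ(z, ε). Then there exist a_d, b_d > 0 such that for all θ, θ', z, z', ε and all probability measures r, r' with finite first moment: ‖d^{p,γ}_{θ,r}(z, ε) − d^{p,γ}_{θ',r'}(z', ε)‖ ≤ (a_d‖ε‖ + b_d)(‖(θ, z) − (θ', z')‖ + W₁(r, r')). -/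

import Mathlib

open MeasureTheory Filter Topology
open scoped ENNReal NNReal

/-- Shorthand for Euclidean space `ℝ^n`. -/
abbrev Esp (n : ℕ) : Type := EuclideanSpace ℝ (Fin n)

/-- The Wasserstein-1 cost between two measures: the infimum over couplings `π` (measures on the
product with the given marginals) of `∫ ‖z − z'‖ dπ(z, z')`. -/
noncomputable def W1 {E : Type*} [MeasurableSpace E] [NormedAddCommGroup E]
    (r r' : Measure E) : ℝ≥0∞ :=
  ⨅ π : {π : Measure (E × E) // π.map Prod.fst = r ∧ π.map Prod.snd = r'},
    ∫⁻ p, (‖p.1 - p.2‖₊ : ℝ≥0∞) ∂π.1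

/-- The semi-implicit density `q_{θ,r}(x) = ∫ k_θ(x|z) r(dz)`. -/
noncomputable def qdens {dθ dx dz : ℕ} (k : Esp dθ → Esp dx → Esp dz → ℝ)
    (θ : Esp dθ) (r : Measure (Esp dz)) (x : Esp dx) : ℝ :=
  ∫ z, k θ x z ∂r

/-- The score difference `d^{p,γ}_{θ,r}(z, ε) = ∇_x log(q_{θ,r}(x) + γ) − ∇_x log p(x, y)` at
`x = φ_θ(z, ε)`. -/
noncomputable def scoreDiff {dθ dx dz : ℕ} (γ : ℝ) (k : Esp dθ → Esp dx → Esp dz → ℝ)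
    (p : Esp dx → ℝ) (φ : Esp dθ → Esp dz → Esp dx → Esp dx)
    (θ : Esp dθ) (r : Measure (Esp dz)) (z : Esp dz) (ε : Esp dx) : Esp dx :=
  gradient (fun x => Real.log (qdens k θ r x + γ)) (φ θ z ε) -
    gradient (fun x => Real.log (p x)) (φ θ z ε)

lemma aux_quot {E : Type*} [NormedAddCommGroup E] [NormedSpace ℝ E]
    {γ B a b : ℝ} (hγ : 0 < γ) (ha : γ ≤ a) (hb : γ ≤ b)
    {u v : E} (hv : ‖v‖ ≤ B) :
    ‖a⁻¹ • u - b⁻¹ • v‖ ≤ (1/γ) * ‖u - v‖ + (B/γ^2) * |a - b| := by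
  have ha0 : 0 < a := lt_of_lt_of_le hγ ha
  have hb0 : 0 < b := lt_of_lt_of_le hγ hb
  have hB0 : 0 ≤ B := le_trans (norm_nonneg v) hv
  have h1 : a⁻¹ • u - b⁻¹ • v = a⁻¹ • (u - v) + (a⁻¹ - b⁻¹) • v := by
    rw [smul_sub, sub_smul]; abel
  rw [h1]
  have h2 : |a⁻¹ - b⁻¹| ≤ |a - b| / γ^2 := by
    have he : a⁻¹ - b⁻¹ = (b - a) / (a * b) := by field_simp
    rw [he, abs_div, abs_of_pos (mul_pos ha0 hb0), abs_sub_comm]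
    apply div_le_div_of_nonneg_left (abs_nonneg _) (by positivity)
    nlinarith
  calc ‖a⁻¹ • (u - v) + (a⁻¹ - b⁻¹) • v‖ ≤ ‖a⁻¹ • (u - v)‖ + ‖(a⁻¹ - b⁻¹) • v‖ := norm_add_le _ _
    _ = |a⁻¹| * ‖u - v‖ + |a⁻¹ - b⁻¹| * ‖v‖ := by
        rw [norm_smul, norm_smul, Real.norm_eq_abs, Real.norm_eq_abs]
    _ ≤ (1/γ) * ‖u - v‖ + (|a - b|/γ^2) * B := by
        gcongr <;> first
          | exact norm_nonneg _
          | exact hv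
          | exact h2
          | (rw [abs_of_pos (inv_pos.mpr ha0), one_div]; exact inv_anti₀ hγ ha)
    _ = (1/γ) * ‖u - v‖ + (B/γ^2) * |a - b| := by ring

lemma aux_triple_norm {A B C : Type*} [NormedAddCommGroup A] [NormedAddCommGroup B]
    [NormedAddCommGroup C] (a : A) (b : B) (c : C) :
    ‖((a, b, c) : A × B × C)‖ ≤ ‖a‖ + ‖b‖ + ‖c‖ := by
  have h0a := norm_nonneg a
  have h0b := norm_nonneg b
  have h0c := norm_nonneg c
  simp only [Prod.norm_def]
  apply max_le (by linarith)
  apply max_le <;> linarith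

set_option maxHeartbeats 2000000 in
/-- Lipschitz continuity of the score difference `d^{p,γ}_{θ,r} = s^γ_{θ,r} − s_p`: under the
Lipschitz-gradient regularity of the target, boundedness and Lipschitz-gradient regularity of the
kernel, and a linear-growth bound on `∇_{(θ,z)} φ`, there are `a_d, b_d > 0` with
`‖d^{p,γ}_{θ,r}(z,ε) − d^{p,γ}_{θ',r'}(z',ε)‖ ≤ (a_d‖ε‖ + b_d)(‖(θ,z) − (θ',z')‖ + W₁(r, r'))`. -/
theorem score_difference_lipschitz {dθ dx dz : ℕ} (γ : ℝ) (hγ : 0 < γ)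
    (Bk Kk Kp : ℝ) (hBk : 0 < Bk) (hKk : 0 < Kk) (hKp : 0 < Kp)
    (p : Esp dx → ℝ) (hp_pos : ∀ x, 0 < p x)
    (hp_diff : Differentiable ℝ (fun x => Real.log (p x)))
    (hp_gradlip : ∀ x x' : Esp dx,
      ‖gradient (fun y => Real.log (p y)) x - gradient (fun y => Real.log (p y)) x'‖ ≤
        Kp * ‖x - x'‖)
    (k : Esp dθ → Esp dx → Esp dz → ℝ)
    (hk_nonneg : ∀ θ x z, 0 ≤ k θ x z)
    (hk_diff : Differentiable ℝ (fun q : Esp dθ × Esp dx × Esp dz => k q.1 q.2.1 q.2.2))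
    (hk_bdd : ∀ (θ : Esp dθ) (x : Esp dx) (z : Esp dz),
      k θ x z + ‖fderiv ℝ (fun q : Esp dθ × Esp dx × Esp dz => k q.1 q.2.1 q.2.2) (θ, x, z)‖ ≤ Bk)
    (hk_gradlip : ∀ (θ θ' : Esp dθ) (x x' : Esp dx) (z z' : Esp dz),
      ‖gradient (fun y => k θ y z) x - gradient (fun y => k θ' y z') x'‖ ≤
        Kk * ‖((θ, x, z) : Esp dθ × Esp dx × Esp dz) - (θ', x', z')‖)
    (φ : Esp dθ → Esp dz → Esp dx → Esp dx)
    (aφ bφ : ℝ) (haφ : 0 ≤ aφ) (hbφ : 0 < bφ)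
    (hφ_diff : ∀ ε, Differentiable ℝ (fun q : Esp dθ × Esp dz => φ q.1 q.2 ε))
    (hφ_bdd : ∀ (θ : Esp dθ) (z : Esp dz) (ε : Esp dx),
      ‖fderiv ℝ (fun q : Esp dθ × Esp dz => φ q.1 q.2 ε) (θ, z)‖ ≤ aφ * ‖ε‖ + bφ) :
    ∃ ad bd : ℝ, 0 < ad ∧ 0 < bd ∧
      ∀ (θ θ' : Esp dθ) (z z' : Esp dz) (ε : Esp dx)
        (r r' : Measure (Esp dz)),
        IsProbabilityMeasure r → IsProbabilityMeasure r' →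
        (∫⁻ w, (‖w‖₊ : ℝ≥0∞) ∂r) < ⊤ → (∫⁻ w, (‖w‖₊ : ℝ≥0∞) ∂r') < ⊤ →
        ‖scoreDiff γ k p φ θ r z ε - scoreDiff γ k p φ θ' r' z' ε‖ ≤
          (ad * ‖ε‖ + bd) * (‖((θ, z) : Esp dθ × Esp dz) - (θ', z')‖ + (W1 r r').toReal) := by
  classical
  obtain ⟨A, hA, hA_def⟩ : ∃ A : ℝ, 0 < A ∧ A = Kk / γ + Bk ^ 2 / γ ^ 2 :=
    ⟨_, by positivity, rfl⟩
  have hKpA : (0:ℝ) < Kp + A := by linarith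
  refine ⟨(Kp + A) * aφ + 1, (Kp + A) * bφ + A + 1, ?_, ?_, ?_⟩
  · nlinarith [mul_nonneg hKpA.le haφ]
  · nlinarith [mul_pos hKpA hbφ]
  intro θ θ' z z' ε r r' hr hr' hrfin hr'fin
  -- notation
  set kf : Esp dθ × Esp dx × Esp dz → ℝ := fun q => k q.1 q.2.1 q.2.2 with hkf_def
  set D : (Esp dθ × Esp dx × Esp dz) → (Esp dθ × Esp dx × Esp dz) →L[ℝ] ℝ := fderiv ℝ kf
    with hD_def
  set J : Esp dx →L[ℝ] Esp dθ × Esp dx × Esp dz :=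
    (0 : Esp dx →L[ℝ] Esp dθ).prod ((ContinuousLinearMap.id ℝ (Esp dx)).prod 0) with hJ_def
  set g : Esp dθ → Esp dz → Esp dx → Esp dx :=
    fun θ₀ z₀ x₀ => gradient (fun y => k θ₀ y z₀) x₀ with hg_def
  -- basic bounds on k and its derivative
  have hD_le : ∀ q, ‖D q‖ ≤ Bk := by
    intro q
    have h2 := hk_bdd q.1 q.2.1 q.2.2
    have h0 := hk_nonneg q.1 q.2.1 q.2.2
    show ‖D (q.1, q.2.1, q.2.2)‖ ≤ Bk
    linarith
  have hk_le : ∀ q, |kf q| ≤ Bk := by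
    intro q
    have := hk_bdd q.1 q.2.1 q.2.2
    have h0 := hk_nonneg q.1 q.2.1 q.2.2
    have h1 : (0:ℝ) ≤ ‖D (q.1, q.2.1, q.2.2)‖ := norm_nonneg _
    rw [abs_of_nonneg h0]
    show k q.1 q.2.1 q.2.2 ≤ Bk
    linarith
  have hk_lip : ∀ q q', |kf q - kf q'| ≤ Bk * ‖q - q'‖ := by
    intro q q'
    have := Convex.norm_image_sub_le_of_norm_fderiv_le (s := Set.univ) (f := kf)
      (fun y _ => hk_diff y) (fun y _ => hD_le y) convex_univ
      (Set.mem_univ q') (Set.mem_univ q)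
    simpa [Real.norm_eq_abs] using this
  -- the partial derivative of k in x
  have hJ_app : ∀ v : Esp dx, J v = (0, v, 0) := fun v => rfl
  have hJ_le : ‖J‖ ≤ 1 := by
    apply ContinuousLinearMap.opNorm_le_bound _ zero_le_one
    intro v
    rw [hJ_app, one_mul]
    simp [Prod.norm_def]
  have hpart : ∀ (θ₀ : Esp dθ) (z₀ : Esp dz) (x₀ : Esp dx),
      HasFDerivAt (fun y => k θ₀ y z₀) ((D (θ₀, x₀, z₀)).comp J) x₀ := by
    intro θ₀ z₀ x₀
    have hemb : HasFDerivAt (fun y : Esp dx => ((θ₀, y, z₀) : Esp dθ × Esp dx × Esp dz)) J x₀ :=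
      (hasFDerivAt_const θ₀ x₀).prodMk ((hasFDerivAt_id x₀).prodMk (hasFDerivAt_const z₀ x₀))
    exact ((hk_diff (θ₀, x₀, z₀)).hasFDerivAt).comp x₀ hemb
  have htd : ∀ (θ₀ : Esp dθ) (z₀ : Esp dz) (x₀ : Esp dx),
      InnerProductSpace.toDual ℝ (Esp dx) (g θ₀ z₀ x₀) = (D (θ₀, x₀, z₀)).comp J := by
    intro θ₀ z₀ x₀
    have : g θ₀ z₀ x₀ =
        (InnerProductSpace.toDual ℝ (Esp dx)).symm ((D (θ₀, x₀, z₀)).comp J) := by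
      rw [hg_def]
      simp only [gradient, (hpart θ₀ z₀ x₀).fderiv]
    rw [this, LinearIsometryEquiv.apply_symm_apply]
  have hg_le : ∀ θ₀ z₀ x₀, ‖g θ₀ z₀ x₀‖ ≤ Bk := by
    intro θ₀ z₀ x₀
    have h1 : ‖g θ₀ z₀ x₀‖ = ‖(D (θ₀, x₀, z₀)).comp J‖ := by
      rw [← htd θ₀ z₀ x₀, LinearIsometryEquiv.norm_map]
    rw [h1]
    calc ‖(D (θ₀, x₀, z₀)).comp J‖ ≤ ‖D (θ₀, x₀, z₀)‖ * ‖J‖ := ContinuousLinearMap.opNorm_comp_le _ _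
      _ ≤ Bk * 1 := mul_le_mul (hD_le _) hJ_le (norm_nonneg _) hBk.le
      _ = Bk := mul_one _
  have hg_cont : ∀ (θ₀ : Esp dθ) (x₀ : Esp dx), Continuous (fun z₀ => g θ₀ z₀ x₀) := by
    intro θ₀ x₀
    have : LipschitzWith (Real.toNNReal Kk) (fun z₀ => g θ₀ z₀ x₀) := by
      apply LipschitzWith.of_dist_le_mul
      intro z₁ z₂
      rw [dist_eq_norm, dist_eq_norm, Real.coe_toNNReal _ hKk.le]
      have := hk_gradlip θ₀ θ₀ x₀ x₀ z₁ z₂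
      have heq : ‖((θ₀, x₀, z₁) : Esp dθ × Esp dx × Esp dz) - (θ₀, x₀, z₂)‖ = ‖z₁ - z₂‖ := by
        simp [Prod.norm_def, Prod.mk_sub_mk]
      rw [heq] at this
      exact this
    exact this.continuous
  have hk_cont : Continuous kf := hk_diff.continuous
  -- the gradient of qdens
  have hq_nonneg : ∀ (θ₀ : Esp dθ) (μ : Measure (Esp dz)) (x₀ : Esp dx),
      0 ≤ qdens k θ₀ μ x₀ :=
    fun θ₀ μ x₀ => integral_nonneg (fun z₀ => hk_nonneg θ₀ x₀ z₀)
  have hq_grad : ∀ (θ₀ : Esp dθ) (x₀ : Esp dx) (μ : Measure (Esp dz)),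
      IsProbabilityMeasure μ →
      HasGradientAt (fun y => Real.log (qdens k θ₀ μ y + γ))
        ((qdens k θ₀ μ x₀ + γ)⁻¹ • ∫ z₀, g θ₀ z₀ x₀ ∂μ) x₀ := by
    intro θ₀ x₀ μ hμ
    have hcontk : ∀ y : Esp dx, Continuous (fun z₀ : Esp dz => k θ₀ y z₀) := by
      intro y
      have : Continuous (fun z₀ : Esp dz => kf (θ₀, y, z₀)) :=
        hk_cont.comp (continuous_const.prodMk (continuous_const.prodMk continuous_id))
      exact this
    have hmain : HasFDerivAt (fun y => qdens k θ₀ μ y)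
        (∫ z₀, (D (θ₀, x₀, z₀)).comp J ∂μ) x₀ := by
      have h := hasFDerivAt_integral_of_dominated_of_fderiv_le (𝕜 := ℝ) (μ := μ)
        (F := fun y (z₀ : Esp dz) => k θ₀ y z₀)
        (F' := fun y (z₀ : Esp dz) => (D (θ₀, y, z₀)).comp J)
        (bound := fun _ => Bk) (x₀ := x₀) (s := Set.univ) Filter.univ_mem
        (Eventually.of_forall fun y => (hcontk y).aestronglyMeasurable)
        ((integrable_const Bk).mono' (hcontk x₀).aestronglyMeasurable
          (Eventually.of_forall fun z₀ => by
            rw [Real.norm_eq_abs]; exact hk_le (θ₀, x₀, z₀)))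
        (by
          have heq : (fun z₀ : Esp dz => (D (θ₀, x₀, z₀)).comp J) =
              fun z₀ => InnerProductSpace.toDual ℝ (Esp dx) (g θ₀ z₀ x₀) := by
            funext z₀; rw [htd]
          show AEStronglyMeasurable (fun z₀ : Esp dz => (D (θ₀, x₀, z₀)).comp J) μ
          rw [heq]
          exact ((InnerProductSpace.toDual ℝ (Esp dx)).continuous.comp
            (hg_cont θ₀ x₀)).aestronglyMeasurable)
        (Eventually.of_forall fun z₀ y _ => by
          calc ‖(D (θ₀, y, z₀)).comp J‖ ≤ ‖D (θ₀, y, z₀)‖ * ‖J‖ :=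
              ContinuousLinearMap.opNorm_comp_le _ _
            _ ≤ Bk * 1 := mul_le_mul (hD_le _) hJ_le (norm_nonneg _) hBk.le
            _ = Bk := mul_one _)
        (integrable_const Bk)
        (Eventually.of_forall fun z₀ y _ => hpart θ₀ z₀ y)
      exact h
    have htd_int : InnerProductSpace.toDual ℝ (Esp dx) (∫ z₀, g θ₀ z₀ x₀ ∂μ) =
        ∫ z₀, (D (θ₀, x₀, z₀)).comp J ∂μ := by
      have h1 : ∫ z₀, InnerProductSpace.toDual ℝ (Esp dx) (g θ₀ z₀ x₀) ∂μ =
          InnerProductSpace.toDual ℝ (Esp dx) (∫ z₀, g θ₀ z₀ x₀ ∂μ) :=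
        (InnerProductSpace.toDual ℝ (Esp dx)).toLinearIsometry.integral_comp_comm
          (fun z₀ => g θ₀ z₀ x₀)
      rw [← h1]
      congr 1
      funext z₀
      rw [htd]
    have hpos : 0 < qdens k θ₀ μ x₀ + γ := by linarith [hq_nonneg θ₀ μ x₀]
    have hlog : HasFDerivAt (fun y => Real.log (qdens k θ₀ μ y + γ))
        ((qdens k θ₀ μ x₀ + γ)⁻¹ •
          InnerProductSpace.toDual ℝ (Esp dx) (∫ z₀, g θ₀ z₀ x₀ ∂μ)) x₀ := by
      have h1 : HasFDerivAt (fun y => qdens k θ₀ μ y + γ)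
          (InnerProductSpace.toDual ℝ (Esp dx) (∫ z₀, g θ₀ z₀ x₀ ∂μ)) x₀ := by
        rw [htd_int]; exact hmain.add_const γ
      have h2 : HasDerivAt Real.log (qdens k θ₀ μ x₀ + γ)⁻¹ (qdens k θ₀ μ x₀ + γ) :=
        Real.hasDerivAt_log hpos.ne'
      exact h2.comp_hasFDerivAt x₀ h1
    apply hasGradientAt_iff_hasFDerivAt.mpr
    have hsm : InnerProductSpace.toDual ℝ (Esp dx)
        ((qdens k θ₀ μ x₀ + γ)⁻¹ • ∫ z₀, g θ₀ z₀ x₀ ∂μ) =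
        (qdens k θ₀ μ x₀ + γ)⁻¹ •
          InnerProductSpace.toDual ℝ (Esp dx) (∫ z₀, g θ₀ z₀ x₀ ∂μ) := by
      simp
    rw [hsm]
    exact hlog
  -- the score function and its formula
  have hscore : ∀ (θ₀ : Esp dθ) (x₀ : Esp dx) (μ : Measure (Esp dz)),
      IsProbabilityMeasure μ →
      gradient (fun y => Real.log (qdens k θ₀ μ y + γ)) x₀ =
        (qdens k θ₀ μ x₀ + γ)⁻¹ • ∫ z₀, g θ₀ z₀ x₀ ∂μ := by
    intro θ₀ x₀ μ hμ
    exact (hq_grad θ₀ x₀ μ hμ).gradient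
  -- abbreviations for this instance
  set x : Esp dx := φ θ z ε with hx_def
  set x' : Esp dx := φ θ' z' ε with hx'_def
  set Δn : ℝ := ‖((θ, z) : Esp dθ × Esp dz) - (θ', z')‖ with hΔn_def
  set C : ℝ := ((Kp + A) * aφ + 1) * ‖ε‖ + ((Kp + A) * bφ + A + 1) with hC_def
  have hΔn0 : 0 ≤ Δn := norm_nonneg _
  have hC0 : 0 < C := by
    have h1 : 0 ≤ ((Kp + A) * aφ + 1) * ‖ε‖ :=
      mul_nonneg (by nlinarith [mul_nonneg hKpA.le haφ]) (norm_nonneg _)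
    nlinarith [mul_pos hKpA hbφ]
  -- Lipschitz property of φ
  have hxx' : ‖x - x'‖ ≤ (aφ * ‖ε‖ + bφ) * Δn := by
    have := Convex.norm_image_sub_le_of_norm_fderiv_le (s := Set.univ)
      (f := fun q : Esp dθ × Esp dz => φ q.1 q.2 ε)
      (fun y _ => (hφ_diff ε) y)
      (fun y _ => hφ_bdd y.1 y.2 ε) convex_univ (Set.mem_univ (θ', z')) (Set.mem_univ (θ, z))
    simpa [hx_def, hx'_def, hΔn_def] using this
  have hθθ' : ‖θ - θ'‖ ≤ Δn := by
    rw [hΔn_def, Prod.mk_sub_mk, Prod.norm_def]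
    exact le_max_left _ _
  -- main coupling estimate for the regularized scores
  have main : ∀ (π : Measure (Esp dz × Esp dz)), π.map Prod.fst = r → π.map Prod.snd = r' →
      (∫⁻ pp, (‖pp.1 - pp.2‖₊ : ℝ≥0∞) ∂π) ≠ ⊤ →
      ‖((qdens k θ r x + γ)⁻¹ • ∫ z₀, g θ z₀ x ∂r) -
          ((qdens k θ' r' x' + γ)⁻¹ • ∫ z₀, g θ' z₀ x' ∂r')‖ ≤
        A * (‖θ - θ'‖ + ‖x - x'‖ + (∫⁻ pp, (‖pp.1 - pp.2‖₊ : ℝ≥0∞) ∂π).toReal) := by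
    intro π hπ1 hπ2 hπfin
    set T : ℝ := (∫⁻ pp, (‖pp.1 - pp.2‖₊ : ℝ≥0∞) ∂π).toReal with hT_def
    have hT0 : 0 ≤ T := ENNReal.toReal_nonneg
    have hπprob : IsProbabilityMeasure π := by
      constructor
      rw [← Set.preimage_univ (f := (Prod.fst : Esp dz × Esp dz → Esp dz)),
        ← Measure.map_apply measurable_fst MeasurableSet.univ, hπ1]
      exact measure_univ
    -- continuity and integrability over the coupling
    have hcont1 : Continuous (fun pp : Esp dz × Esp dz => g θ pp.1 x) :=
      (hg_cont θ x).comp continuous_fst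
    have hcont2 : Continuous (fun pp : Esp dz × Esp dz => g θ' pp.2 x') :=
      (hg_cont θ' x').comp continuous_snd
    have hint1 : Integrable (fun pp : Esp dz × Esp dz => g θ pp.1 x) π :=
      (integrable_const Bk).mono' hcont1.aestronglyMeasurable
        (Eventually.of_forall fun pp => hg_le θ pp.1 x)
    have hint2 : Integrable (fun pp : Esp dz × Esp dz => g θ' pp.2 x') π :=
      (integrable_const Bk).mono' hcont2.aestronglyMeasurable
        (Eventually.of_forall fun pp => hg_le θ' pp.2 x')
    have hcontk1 : Continuous (fun pp : Esp dz × Esp dz => k θ x pp.1) := by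
      have : Continuous (fun pp : Esp dz × Esp dz => kf (θ, x, pp.1)) :=
        hk_cont.comp (continuous_const.prodMk (continuous_const.prodMk continuous_fst))
      exact this
    have hcontk2 : Continuous (fun pp : Esp dz × Esp dz => k θ' x' pp.2) := by
      have : Continuous (fun pp : Esp dz × Esp dz => kf (θ', x', pp.2)) :=
        hk_cont.comp (continuous_const.prodMk (continuous_const.prodMk continuous_snd))
      exact this
    have hintk1 : Integrable (fun pp : Esp dz × Esp dz => k θ x pp.1) π :=
      (integrable_const Bk).mono' hcontk1.aestronglyMeasurable
        (Eventually.of_forall fun pp => by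
          rw [Real.norm_eq_abs]; exact hk_le (θ, x, pp.1))
    have hintk2 : Integrable (fun pp : Esp dz × Esp dz => k θ' x' pp.2) π :=
      (integrable_const Bk).mono' hcontk2.aestronglyMeasurable
        (Eventually.of_forall fun pp => by
          rw [Real.norm_eq_abs]; exact hk_le (θ', x', pp.2))
    have hcontT : Continuous (fun pp : Esp dz × Esp dz => ‖pp.1 - pp.2‖) :=
      (continuous_fst.sub continuous_snd).norm
    have hintT : Integrable (fun pp : Esp dz × Esp dz => ‖pp.1 - pp.2‖) π := by
      refine ⟨hcontT.aestronglyMeasurable, ?_⟩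
      simpa [HasFiniteIntegral, enorm_norm, enorm_eq_nnnorm] using hπfin.lt_top
    have hTeq : ∫ pp, ‖pp.1 - pp.2‖ ∂π = T := by
      rw [integral_eq_lintegral_of_nonneg_ae (Eventually.of_forall fun pp => norm_nonneg _)
        hcontT.aestronglyMeasurable, hT_def]
      congr 1
      apply lintegral_congr
      intro pp
      rw [ofReal_norm, enorm_eq_nnnorm]
    -- change of variables through the coupling
    have hmapg1 : ∫ z₀, g θ z₀ x ∂r = ∫ pp, g θ pp.1 x ∂π := by
      rw [← hπ1, integral_map measurable_fst.aemeasurable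
        (hg_cont θ x).aestronglyMeasurable]
    have hmapg2 : ∫ z₀, g θ' z₀ x' ∂r' = ∫ pp, g θ' pp.2 x' ∂π := by
      rw [← hπ2, integral_map measurable_snd.aemeasurable
        (hg_cont θ' x').aestronglyMeasurable]
    have hmapk1 : qdens k θ r x = ∫ pp, k θ x pp.1 ∂π := by
      show ∫ z₀, k θ x z₀ ∂r = _
      rw [← hπ1, integral_map measurable_fst.aemeasurable
        (by
          have : Continuous (fun z₀ : Esp dz => kf (θ, x, z₀)) :=
            hk_cont.comp (continuous_const.prodMk (continuous_const.prodMk continuous_id))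
          exact this.aestronglyMeasurable)]
    have hmapk2 : qdens k θ' r' x' = ∫ pp, k θ' x' pp.2 ∂π := by
      show ∫ z₀, k θ' x' z₀ ∂r' = _
      rw [← hπ2, integral_map measurable_snd.aemeasurable
        (by
          have : Continuous (fun z₀ : Esp dz => kf (θ', x', z₀)) :=
            hk_cont.comp (continuous_const.prodMk (continuous_const.prodMk continuous_id))
          exact this.aestronglyMeasurable)]
    -- bound for the difference of the gradient integrals
    have hGdiff : ‖(∫ z₀, g θ z₀ x ∂r) - ∫ z₀, g θ' z₀ x' ∂r'‖ ≤
        Kk * (‖θ - θ'‖ + ‖x - x'‖ + T) := by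
      rw [hmapg1, hmapg2, ← integral_sub hint1 hint2]
      calc ‖∫ pp, (g θ pp.1 x - g θ' pp.2 x') ∂π‖
          ≤ ∫ pp, ‖g θ pp.1 x - g θ' pp.2 x'‖ ∂π := norm_integral_le_integral_norm _
        _ ≤ ∫ pp, (Kk * (‖θ - θ'‖ + ‖x - x'‖) + Kk * ‖pp.1 - pp.2‖) ∂π := by
            apply integral_mono ((hint1.sub hint2).norm)
              ((integrable_const _).add (hintT.const_mul Kk))
            intro pp
            have h1 := hk_gradlip θ θ' x x' pp.1 pp.2
            have h2 : ‖((θ, x, pp.1) : Esp dθ × Esp dx × Esp dz) - (θ', x', pp.2)‖ ≤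
                ‖θ - θ'‖ + ‖x - x'‖ + ‖pp.1 - pp.2‖ := by
              rw [Prod.mk_sub_mk, Prod.mk_sub_mk]
              exact aux_triple_norm _ _ _
            calc ‖g θ pp.1 x - g θ' pp.2 x'‖
                ≤ Kk * (‖θ - θ'‖ + ‖x - x'‖ + ‖pp.1 - pp.2‖) :=
                  h1.trans (mul_le_mul_of_nonneg_left h2 hKk.le)
              _ = Kk * (‖θ - θ'‖ + ‖x - x'‖) + Kk * ‖pp.1 - pp.2‖ := by ring
        _ = Kk * (‖θ - θ'‖ + ‖x - x'‖) + Kk * ∫ pp, ‖pp.1 - pp.2‖ ∂π := by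
            rw [integral_add (integrable_const _) (hintT.const_mul Kk), integral_const,
              integral_const_mul]
            simp [measure_univ]
        _ = Kk * (‖θ - θ'‖ + ‖x - x'‖ + T) := by rw [hTeq]; ring
    -- bound for the difference of the densities
    have hqdiff : |qdens k θ r x - qdens k θ' r' x'| ≤ Bk * (‖θ - θ'‖ + ‖x - x'‖ + T) := by
      rw [hmapk1, hmapk2, ← integral_sub hintk1 hintk2]
      calc |∫ pp, (k θ x pp.1 - k θ' x' pp.2) ∂π|
          ≤ ∫ pp, |k θ x pp.1 - k θ' x' pp.2| ∂π := by
            simpa [Real.norm_eq_abs] using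
              norm_integral_le_integral_norm (μ := π)
                (fun pp : Esp dz × Esp dz => k θ x pp.1 - k θ' x' pp.2)
        _ ≤ ∫ pp, (Bk * (‖θ - θ'‖ + ‖x - x'‖) + Bk * ‖pp.1 - pp.2‖) ∂π := by
            apply integral_mono ((hintk1.sub hintk2).abs)
              ((integrable_const _).add (hintT.const_mul Bk))
            intro pp
            have h1 := hk_lip (θ, x, pp.1) (θ', x', pp.2)
            have h2 : ‖((θ, x, pp.1) : Esp dθ × Esp dx × Esp dz) - (θ', x', pp.2)‖ ≤
                ‖θ - θ'‖ + ‖x - x'‖ + ‖pp.1 - pp.2‖ := by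
              rw [Prod.mk_sub_mk, Prod.mk_sub_mk]
              exact aux_triple_norm _ _ _
            calc |k θ x pp.1 - k θ' x' pp.2|
                ≤ Bk * ‖((θ, x, pp.1) : Esp dθ × Esp dx × Esp dz) - (θ', x', pp.2)‖ := h1
              _ ≤ Bk * (‖θ - θ'‖ + ‖x - x'‖ + ‖pp.1 - pp.2‖) :=
                  mul_le_mul_of_nonneg_left h2 hBk.le
              _ = Bk * (‖θ - θ'‖ + ‖x - x'‖) + Bk * ‖pp.1 - pp.2‖ := by ring
        _ = Bk * (‖θ - θ'‖ + ‖x - x'‖) + Bk * ∫ pp, ‖pp.1 - pp.2‖ ∂π := by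
            rw [integral_add (integrable_const _) (hintT.const_mul Bk), integral_const,
              integral_const_mul]
            simp [measure_univ]
        _ = Bk * (‖θ - θ'‖ + ‖x - x'‖ + T) := by rw [hTeq]; ring
    -- combine via the quotient bound
    have hvle : ‖∫ z₀, g θ' z₀ x' ∂r'‖ ≤ Bk := by
      have h := norm_integral_le_of_norm_le (μ := r') (integrable_const Bk)
        (Eventually.of_forall fun z₀ => hg_le θ' z₀ x')
      simpa [measure_univ] using h
    have hγa : γ ≤ qdens k θ r x + γ := by linarith [hq_nonneg θ r x]
    have hγb : γ ≤ qdens k θ' r' x' + γ := by linarith [hq_nonneg θ' r' x']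
    calc ‖((qdens k θ r x + γ)⁻¹ • ∫ z₀, g θ z₀ x ∂r) -
          ((qdens k θ' r' x' + γ)⁻¹ • ∫ z₀, g θ' z₀ x' ∂r')‖
        ≤ (1/γ) * ‖(∫ z₀, g θ z₀ x ∂r) - ∫ z₀, g θ' z₀ x' ∂r'‖ +
          (Bk/γ^2) * |(qdens k θ r x + γ) - (qdens k θ' r' x' + γ)| :=
          aux_quot hγ hγa hγb hvle
      _ = (1/γ) * ‖(∫ z₀, g θ z₀ x ∂r) - ∫ z₀, g θ' z₀ x' ∂r'‖ +
          (Bk/γ^2) * |qdens k θ r x - qdens k θ' r' x'| := by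
          have : (qdens k θ r x + γ) - (qdens k θ' r' x' + γ) =
              qdens k θ r x - qdens k θ' r' x' := by ring
          rw [this]
      _ ≤ (1/γ) * (Kk * (‖θ - θ'‖ + ‖x - x'‖ + T)) +
          (Bk/γ^2) * (Bk * (‖θ - θ'‖ + ‖x - x'‖ + T)) := by
          gcongr
      _ = A * (‖θ - θ'‖ + ‖x - x'‖ + T) := by rw [hA_def]; ring
  -- finiteness of W1
  have hW1fin : W1 r r' ≠ ⊤ := by
    have h1 : (r.prod r').map Prod.fst = r := by
      rw [Measure.map_fst_prod]; simp
    have h2 : (r.prod r').map Prod.snd = r' := by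
      rw [Measure.map_snd_prod]; simp
    have hle : W1 r r' ≤ ∫⁻ pp, (‖pp.1 - pp.2‖₊ : ℝ≥0∞) ∂(r.prod r') :=
      iInf_le (fun π : {π : Measure (Esp dz × Esp dz) //
          π.map Prod.fst = r ∧ π.map Prod.snd = r'} =>
        ∫⁻ pp, (‖pp.1 - pp.2‖₊ : ℝ≥0∞) ∂π.1) ⟨r.prod r', h1, h2⟩
    have hstep : ∫⁻ pp, (‖pp.1 - pp.2‖₊ : ℝ≥0∞) ∂(r.prod r') ≤
        ∫⁻ pp, ((‖pp.1‖₊ : ℝ≥0∞) + (‖pp.2‖₊ : ℝ≥0∞)) ∂(r.prod r') := by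
      apply lintegral_mono
      intro pp
      show (‖pp.1 - pp.2‖₊ : ℝ≥0∞) ≤ ((‖pp.1‖₊ + ‖pp.2‖₊ : ℝ≥0) : ℝ≥0∞)
      exact_mod_cast nnnorm_sub_le pp.1 pp.2
    have hm1 : Measurable (fun pp : Esp dz × Esp dz => (‖pp.1‖₊ : ℝ≥0∞)) :=
      measurable_fst.nnnorm.coe_nnreal_ennreal
    have hm2 : Measurable (fun pp : Esp dz × Esp dz => (‖pp.2‖₊ : ℝ≥0∞)) :=
      measurable_snd.nnnorm.coe_nnreal_ennreal
    have hsplit : ∫⁻ pp, ((‖pp.1‖₊ : ℝ≥0∞) + (‖pp.2‖₊ : ℝ≥0∞)) ∂(r.prod r') =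
        (∫⁻ pp, (‖pp.1‖₊ : ℝ≥0∞) ∂(r.prod r')) + ∫⁻ pp, (‖pp.2‖₊ : ℝ≥0∞) ∂(r.prod r') :=
      lintegral_add_left hm1 _
    have he1 : ∫⁻ pp, (‖pp.1‖₊ : ℝ≥0∞) ∂(r.prod r') = ∫⁻ w, (‖w‖₊ : ℝ≥0∞) ∂r := by
      conv_rhs => rw [← h1]
      rw [lintegral_map measurable_nnnorm.coe_nnreal_ennreal measurable_fst]
    have he2 : ∫⁻ pp, (‖pp.2‖₊ : ℝ≥0∞) ∂(r.prod r') = ∫⁻ w, (‖w‖₊ : ℝ≥0∞) ∂r' := by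
      conv_rhs => rw [← h2]
      rw [lintegral_map measurable_nnnorm.coe_nnreal_ennreal measurable_snd]
    have : W1 r r' < ⊤ := by
      refine lt_of_le_of_lt (hle.trans (hstep.trans hsplit.le)) ?_
      rw [he1, he2]
      exact ENNReal.add_lt_top.mpr ⟨hrfin, hr'fin⟩
    exact this.ne
  -- conclusion via near-optimal couplings
  have key : ∀ T : ℝ, 0 ≤ T →
      (∃ (π : Measure (Esp dz × Esp dz)), π.map Prod.fst = r ∧ π.map Prod.snd = r' ∧
        (∫⁻ pp, (‖pp.1 - pp.2‖₊ : ℝ≥0∞) ∂π) ≠ ⊤ ∧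
        (∫⁻ pp, (‖pp.1 - pp.2‖₊ : ℝ≥0∞) ∂π).toReal ≤ T) →
      ‖scoreDiff γ k p φ θ r z ε - scoreDiff γ k p φ θ' r' z' ε‖ ≤ C * (Δn + T) := by
    rintro T hT0 ⟨π, hπ1, hπ2, hπfin, hπT⟩
    have hdecomp : scoreDiff γ k p φ θ r z ε - scoreDiff γ k p φ θ' r' z' ε =
        (((qdens k θ r x + γ)⁻¹ • ∫ z₀, g θ z₀ x ∂r) -
          ((qdens k θ' r' x' + γ)⁻¹ • ∫ z₀, g θ' z₀ x' ∂r')) -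
        (gradient (fun y => Real.log (p y)) x - gradient (fun y => Real.log (p y)) x') := by
      simp only [scoreDiff, ← hx_def, ← hx'_def, hscore θ x r hr, hscore θ' x' r' hr']
      abel
    rw [hdecomp]
    set T' : ℝ := (∫⁻ pp, (‖pp.1 - pp.2‖₊ : ℝ≥0∞) ∂π).toReal with hT'_def
    have hT'0 : 0 ≤ T' := ENNReal.toReal_nonneg
    refine le_trans (norm_sub_le _ _) ?_
    calc ‖((qdens k θ r x + γ)⁻¹ • ∫ z₀, g θ z₀ x ∂r) -
          ((qdens k θ' r' x' + γ)⁻¹ • ∫ z₀, g θ' z₀ x' ∂r')‖ +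
          ‖gradient (fun y => Real.log (p y)) x - gradient (fun y => Real.log (p y)) x'‖
        ≤ A * (‖θ - θ'‖ + ‖x - x'‖ + T') + Kp * ‖x - x'‖ := by
          exact add_le_add (main π hπ1 hπ2 hπfin) (hp_gradlip x x')
      _ ≤ A * (Δn + (aφ * ‖ε‖ + bφ) * Δn + T') + Kp * ((aφ * ‖ε‖ + bφ) * Δn) := by
          gcongr
      _ = (A + (Kp + A) * (aφ * ‖ε‖ + bφ)) * Δn + A * T' := by ring
      _ ≤ C * Δn + C * T' := by
          apply add_le_add
          · apply mul_le_mul_of_nonneg_right _ hΔn0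
            rw [hC_def]; nlinarith [norm_nonneg ε]
          · apply mul_le_mul_of_nonneg_right _ hT'0
            rw [hC_def]
            nlinarith [norm_nonneg ε, mul_nonneg (mul_nonneg hKpA.le haφ) (norm_nonneg ε)]
      _ = C * (Δn + T') := by ring
      _ ≤ C * (Δn + T) := by gcongr
  -- wrap up using near-optimal couplings
  apply le_of_forall_pos_le_add
  intro η hη
  have hCη : (0:ℝ) < η / C := div_pos hη hC0
  have hδ : (0:ℝ≥0∞) < ENNReal.ofReal (η / C) := by
    simp [ENNReal.ofReal_pos, hCη]
  have hlt : W1 r r' < W1 r r' + ENNReal.ofReal (η / C) :=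
    ENNReal.lt_add_right hW1fin hδ.ne'
  rw [W1, iInf_lt_iff] at hlt
  obtain ⟨⟨π, hπ1, hπ2⟩, hπlt⟩ := hlt
  rw [← W1] at hπlt
  have hfin2 : W1 r r' + ENNReal.ofReal (η / C) ≠ ⊤ := by
    simp [hW1fin]
  have hπfin : (∫⁻ pp, (‖pp.1 - pp.2‖₊ : ℝ≥0∞) ∂π) ≠ ⊤ :=
    (hπlt.trans (lt_top_iff_ne_top.mpr hfin2)).ne
  have hTle : (∫⁻ pp, (‖pp.1 - pp.2‖₊ : ℝ≥0∞) ∂π).toReal ≤ (W1 r r').toReal + η / C := by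
    have h := ENNReal.toReal_mono hfin2 hπlt.le
    rwa [ENNReal.toReal_add hW1fin (by simp), ENNReal.toReal_ofReal hCη.le] at h
  have hfinal := key ((W1 r r').toReal + η / C)
    (by positivity) ⟨π, hπ1, hπ2, hπfin, hTle⟩
  have heq : C * (Δn + ((W1 r r').toReal + η / C)) = C * (Δn + (W1 r r').toReal) + η := by
    field_simp
    ring
  rw [heq] at hfinal
  exact hfinal
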